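/- In the construction of Theorem 4, the matching M = {{s_h, s'_h} : 1 ≤ h ≤ m} is a maximum weight matching in the overlap graph G(S), and μ(S) = 2(n−2)m. -/

import Mathlib

open List

/-- The length of the longest suffix of `s` that is also a prefix of `t`. -/
def ovLen (s t : List Bool) : ℕ :=
  Nat.findGreatest (fun i => s.drop (s.length - i) = t.take i) (min s.length t.length)

/-- The binary encoding of `i` as a string of length `r` (big-endian, with leading
zeros); `false` represents '0' and `true` represents '1'. -/
def binEnc (r i : ℕ) : List Bool := (List.range r).map fun k => Nat.testBit i (r - 1 - k)

/-- `p = ⌈(n−1)/3⌉`. -/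
def pOf (n : ℕ) : ℕ := (n + 1) / 3

/-- `q = n − 1 − 2p`. -/
def qOf (n : ℕ) : ℕ := n - 1 - 2 * pOf n

/-- `z = 01…1` of length `p`. -/
def zStr (n : ℕ) : List Bool := false :: List.replicate (pOf n - 1) true

/-- `z* = 1…1` of length `p`. -/
def zStar (n : ℕ) : List Bool := List.replicate (pOf n) true

/-- `x_i`: the binary encoding of the vertex index `i` of length `q − 1`. -/
def xEnc (n i : ℕ) : List Bool := binEnc (qOf n - 1) i

/-- `y_h`: the binary encoding of `2h` of length `q` (its last symbol is '0'). -/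
def yEnc (n h : ℕ) : List Bool := binEnc (qOf n) (2 * h)

/-- `s_h = z y_h z* z x_i z* z x_j z*` for the arc `e_h = (v_i, v_j)`. -/
def sh (n i j h : ℕ) : List Bool :=
  zStr n ++ yEnc n h ++ zStar n ++ zStr n ++ xEnc n i ++ zStar n ++
    zStr n ++ xEnc n j ++ zStar n

/-- `s'_h = z x_i z* z x_j z* z y_h z*` for the arc `e_h = (v_i, v_j)`. -/
def sh' (n i j h : ℕ) : List Bool :=
  zStr n ++ xEnc n i ++ zStar n ++ zStr n ++ xEnc n j ++ zStar n ++
    zStr n ++ yEnc n h ++ zStar n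

/-- The weight of a pair of positions of `S` in the overlap graph `G(S)`. -/
def pairWeight (S : List (List Bool)) (p : ℕ × ℕ) : ℕ :=
  max (ovLen (S.getD p.1 []) (S.getD p.2 [])) (ovLen (S.getD p.2 []) (S.getD p.1 []))

/-- A matching in the overlap graph `G(S)`: a set of pairs of positions of `S` with
pairwise distinct endpoints. -/
def IsMatching (S : List (List Bool)) (M : Finset (ℕ × ℕ)) : Prop :=
  (∀ p ∈ M, p.1 < p.2 ∧ p.2 < S.length) ∧
    ∀ p ∈ M, ∀ q ∈ M, p ≠ q → p.1 ≠ q.1 ∧ p.1 ≠ q.2 ∧ p.2 ≠ q.1 ∧ p.2 ≠ q.2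

/-- `mu S` is the maximum weight of a matching in the overlap graph `G(S)`. -/
noncomputable def mu (S : List (List Bool)) : ℕ :=
  sSup { t | ∃ M : Finset (ℕ × ℕ), IsMatching S M ∧ t = ∑ p ∈ M, pairWeight S p }

/-- The collection S = {s_h, s'_h : 1 ≤ h ≤ m} constructed from the arcs
E 0, …, E (m−1) of a directed graph on n vertices. -/
def Sconstr (n m : ℕ) (E : ℕ → ℕ × ℕ) : List (List Bool) :=
  (List.range m).flatMap fun h =>
    [sh n (E h).1 (E h).2 (h + 1), sh' n (E h).1 (E h).2 (h + 1)]

/-- The matching M = {{s_h, s'_h} : 1 ≤ h ≤ m} (as pairs of positions in Sconstr). -/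
def Mconstr (m : ℕ) : Finset (ℕ × ℕ) :=
  (Finset.range m).image fun h => (2 * h, 2 * h + 1)

/-! ### Auxiliary infrastructure for the proof -/

namespace SSPaux

/-- A segment `z w z*`. -/
def segb (p : ℕ) (w : List Bool) : List Bool :=
  (false :: List.replicate (p-1) true) ++ (w ++ List.replicate p true)

/-- A triple of segments. -/
def tri (p : ℕ) (w1 w2 w3 : List Bool) : List Bool :=
  segb p w1 ++ (segb p w2 ++ segb p w3)

lemma segb_length {p : ℕ} (hp : 1 ≤ p) (w : List Bool) :
    (segb p w).length = 2*p + w.length := by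
  simp [segb]; omega

lemma tri_length {p : ℕ} (hp : 1 ≤ p) (w1 w2 w3 : List Bool) :
    (tri p w1 w2 w3).length = 6*p + w1.length + w2.length + w3.length := by
  simp [tri, segb_length hp]; omega

lemma segb_get0 {p : ℕ} (w : List Bool) : (segb p w)[0]? = some false := by
  simp [segb]

lemma segb_get_z {p k : ℕ} (w : List Bool) (h1 : 0 < k) (h2 : k < p) :
    (segb p w)[k]? = some true := by
  rw [segb, List.getElem?_append_left (by simp; omega)]
  rcases Nat.exists_eq_add_of_lt h1 with ⟨k', rfl⟩
  simp only [Nat.zero_add, List.getElem?_cons_succ, List.getElem?_replicate]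
  rw [if_pos (by omega)]

lemma segb_get_w {p t : ℕ} (hp : 1 ≤ p) (w : List Bool) (ht : t < w.length) :
    (segb p w)[p + t]? = some (w.getD t false) := by
  rw [segb, List.getElem?_append_right (by simp; omega)]
  rw [List.getElem?_append_left (by simp; omega)]
  rw [show p + t - (false :: List.replicate (p-1) true).length = t by simp; omega]
  rw [List.getElem?_eq_getElem ht, List.getD_eq_getElem w false ht]

lemma segb_get_z2 {p k : ℕ} (hp : 1 ≤ p) (w : List Bool) (h1 : p + w.length ≤ k)
    (h2 : k < 2*p + w.length) : (segb p w)[k]? = some true := by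
  rw [segb, List.getElem?_append_right (by simp; omega)]
  rw [List.getElem?_append_right (by simp; omega)]
  rw [List.getElem?_replicate, if_pos (by simp; omega)]

lemma tri_get_cases {p k : ℕ} (hp : 1 ≤ p) (w1 w2 w3 : List Bool) :
    (tri p w1 w2 w3)[k]? =
      if k < 2*p + w1.length then (segb p w1)[k]?
      else if k < 4*p + w1.length + w2.length then (segb p w2)[k - (2*p + w1.length)]?
      else (segb p w3)[k - (4*p + w1.length + w2.length)]? := by
  rw [tri]
  split_ifs with h1 h2
  · rw [List.getElem?_append_left (by rw [segb_length hp]; omega)]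
  · rw [List.getElem?_append_right (by rw [segb_length hp]; omega),
      List.getElem?_append_left (by rw [segb_length hp, segb_length hp]; omega),
      segb_length hp]
  · rw [List.getElem?_append_right (by rw [segb_length hp]; omega),
      List.getElem?_append_right (by rw [segb_length hp, segb_length hp]; omega),
      segb_length hp, segb_length hp]
    congr 1
    omega

lemma tri_get_zero1 {p : ℕ} (hp : 1 ≤ p) (w1 w2 w3 : List Bool) :
    (tri p w1 w2 w3)[0]? = some false := by
  rw [tri_get_cases hp, if_pos (by omega)]; exact segb_get0 w1

lemma tri_get_zero2 {p : ℕ} (hp : 1 ≤ p) (w1 w2 w3 : List Bool) :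
    (tri p w1 w2 w3)[2*p + w1.length]? = some false := by
  rw [tri_get_cases hp, if_neg (by omega), if_pos (by omega)]
  rw [show 2*p + w1.length - (2*p + w1.length) = 0 by omega]
  exact segb_get0 w2

lemma tri_get_zero3 {p : ℕ} (hp : 1 ≤ p) (w1 w2 w3 : List Bool) :
    (tri p w1 w2 w3)[4*p + w1.length + w2.length]? = some false := by
  rw [tri_get_cases hp, if_neg (by omega), if_neg (by omega)]
  rw [show 4*p + w1.length + w2.length - (4*p + w1.length + w2.length) = 0 by omega]
  exact segb_get0 w3

lemma tri_get_w1 {p t : ℕ} (hp : 1 ≤ p) (w1 w2 w3 : List Bool) (ht : t < w1.length) :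
    (tri p w1 w2 w3)[p + t]? = some (w1.getD t false) := by
  rw [tri_get_cases hp, if_pos (by omega)]; exact segb_get_w hp w1 ht

lemma tri_get_w2 {p t : ℕ} (hp : 1 ≤ p) (w1 w2 w3 : List Bool) (ht : t < w2.length) :
    (tri p w1 w2 w3)[3*p + w1.length + t]? = some (w2.getD t false) := by
  rw [tri_get_cases hp, if_neg (by omega), if_pos (by omega)]
  rw [show 3*p + w1.length + t - (2*p + w1.length) = p + t by omega]
  exact segb_get_w hp w2 ht

lemma tri_get_w3 {p t : ℕ} (hp : 1 ≤ p) (w1 w2 w3 : List Bool) (ht : t < w3.length) :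
    (tri p w1 w2 w3)[5*p + w1.length + w2.length + t]? = some (w3.getD t false) := by
  rw [tri_get_cases hp, if_neg (by omega), if_neg (by omega)]
  rw [show 5*p + w1.length + w2.length + t - (4*p + w1.length + w2.length) = p + t by omega]
  exact segb_get_w hp w3 ht

lemma tri_get_true {p k : ℕ} (hp : 1 ≤ p) (w1 w2 w3 : List Bool)
    (hk : k < 6*p + w1.length + w2.length + w3.length)
    (h0 : k ≠ 0)
    (h1 : ¬ (p ≤ k ∧ k < p + w1.length))
    (h2 : k ≠ 2*p + w1.length)
    (h3 : ¬ (3*p + w1.length ≤ k ∧ k < 3*p + w1.length + w2.length))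
    (h4 : k ≠ 4*p + w1.length + w2.length)
    (h5 : ¬ (5*p + w1.length + w2.length ≤ k ∧ k < 5*p + w1.length + w2.length + w3.length)) :
    (tri p w1 w2 w3)[k]? = some true := by
  rw [tri_get_cases hp]
  split_ifs with c1 c2
  · rcases Nat.lt_or_ge k p with h | h
    · exact segb_get_z w1 (by omega) h
    · exact segb_get_z2 hp w1 (by omega) (by omega)
  · rcases Nat.lt_or_ge (k - (2*p + w1.length)) p with h | h
    · exact segb_get_z w2 (by omega) h
    · exact segb_get_z2 hp w2 (by omega) (by omega)
  · rcases Nat.lt_or_ge (k - (4*p + w1.length + w2.length)) p with h | h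
    · exact segb_get_z w3 (by omega) h
    · exact segb_get_z2 hp w3 (by omega) (by omega)

lemma segb_inj {p : ℕ} {u v : List Bool} (h : segb p u = segb p v) : u = v := by
  unfold segb at h
  exact List.append_cancel_right (List.append_cancel_left h)

lemma tri_inj {p : ℕ} (hp : 1 ≤ p) {u1 u2 u3 v1 v2 v3 : List Bool}
    (h1 : u1.length = v1.length) (h2 : u2.length = v2.length)
    (h : tri p u1 u2 u3 = tri p v1 v2 v3) : u1 = v1 ∧ u2 = v2 ∧ u3 = v3 := by
  unfold tri at h
  obtain ⟨e1, h'⟩ := List.append_inj h (by rw [segb_length hp, segb_length hp, h1])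
  obtain ⟨e2, e3⟩ := List.append_inj h' (by rw [segb_length hp, segb_length hp, h2])
  exact ⟨segb_inj e1, segb_inj e2, segb_inj e3⟩

lemma tri_type_ne {n p q : ℕ} (hn : 64 ≤ n) (hpq : 2*p + q = n - 1)
    (hq : 20 ≤ q) (hqp : q ≤ p) {u1 u2 u3 v1 v2 v3 : List Bool} (hu1 : u1.length = q)
    (hv1 : v1.length = q - 1) (hv2 : v2.length = q - 1) (hv3 : v3.length = q) :
    tri p u1 u2 u3 ≠ tri p v1 v2 v3 := by
  intro h
  have hp1 : 1 ≤ p := by omega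
  have h2 := congrArg (fun s => s[2*p + u1.length]?) h
  rw [tri_get_zero2 hp1, tri_get_true hp1 v1 v2 v3 (by omega) (by omega) (by omega)
    (by omega) (by omega) (by omega) (by omega)] at h2
  simp at h2

lemma pq_facts {n : ℕ} (hn : 64 ≤ n) :
    2 * pOf n + qOf n = n - 1 ∧ 20 ≤ qOf n ∧ qOf n ≤ pOf n ∧ pOf n ≤ qOf n + 2 := by
  simp only [qOf, pOf]; omega

lemma two_pow_fact : ∀ k : ℕ, 66 + 3*k ≤ 2^(19+k) := by
  intro k
  induction k with
  | zero => norm_num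
  | succ k ih =>
    rw [show 19 + (k+1) = (19+k) + 1 by omega, pow_succ]
    omega

lemma n_lt_pow {n : ℕ} (hn : 64 ≤ n) : n < 2^(qOf n - 1) := by
  obtain ⟨h1, h2, h3, h4⟩ := pq_facts hn
  have hq : qOf n - 1 = 19 + (qOf n - 20) := by omega
  have := two_pow_fact (qOf n - 20)
  rw [hq]
  omega

lemma binEnc_length (r i : ℕ) : (binEnc r i).length = r := by simp [binEnc]

lemma binEnc_inj {r a b : ℕ} (ha : a < 2^r) (hb : b < 2^r)
    (h : binEnc r a = binEnc r b) : a = b := by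
  apply Nat.eq_of_testBit_eq
  intro t
  by_cases ht : t < r
  · have h2 := congrArg (fun l => l[r-1-t]?) h
    simp only [binEnc, List.getElem?_map, List.getElem?_range, show r-1-t < r by omega,
      if_pos, Option.map_some] at h2
    rw [show r - 1 - (r-1-t) = t by omega] at h2
    exact Option.some.inj h2
  · rw [Nat.testBit_lt_two_pow (lt_of_lt_of_le ha (Nat.pow_le_pow_right (by norm_num) (by omega))),
      Nat.testBit_lt_two_pow (lt_of_lt_of_le hb (Nat.pow_le_pow_right (by norm_num) (by omega)))]

lemma xEnc_inj {n i j : ℕ} (hn : 64 ≤ n) (hi : i ≤ n) (hj : j ≤ n)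
    (h : xEnc n i = xEnc n j) : i = j := by
  have hp := n_lt_pow hn
  exact binEnc_inj (by omega) (by omega) h

lemma yEnc_last {n h : ℕ} (hn : 64 ≤ n) : (yEnc n h).getD (qOf n - 1) false = false := by
  obtain ⟨h1, h2, h3, h4⟩ := pq_facts hn
  have hlt : qOf n - 1 < qOf n := by omega
  rw [yEnc, binEnc, List.getD_eq_getElem _ false (by simpa using hlt)]
  simp only [List.getElem_map, List.getElem_range]
  rw [show qOf n - 1 - (qOf n - 1) = 0 by omega]
  simp [Nat.testBit_zero, Nat.mul_mod_right]

lemma xEnc_length (n i : ℕ) : (xEnc n i).length = qOf n - 1 := binEnc_length _ _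
lemma yEnc_length (n h : ℕ) : (yEnc n h).length = qOf n := binEnc_length _ _

lemma sh_eq_tri (n i j h : ℕ) :
    sh n i j h = tri (pOf n) (yEnc n h) (xEnc n i) (xEnc n j) := by
  simp [sh, tri, segb, zStr, zStar, List.append_assoc]

lemma sh'_eq_tri (n i j h : ℕ) :
    sh' n i j h = tri (pOf n) (xEnc n i) (xEnc n j) (yEnc n h) := by
  simp [sh', tri, segb, zStr, zStar, List.append_assoc]

lemma sh_length {n : ℕ} (hn : 64 ≤ n) (i j h : ℕ) : (sh n i j h).length = 3*n - 5 := by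
  obtain ⟨h1, h2, h3, h4⟩ := pq_facts hn
  rw [sh_eq_tri, tri_length (by omega), yEnc_length, xEnc_length, xEnc_length]; omega

lemma sh'_length {n : ℕ} (hn : 64 ≤ n) (i j h : ℕ) : (sh' n i j h).length = 3*n - 5 := by
  obtain ⟨h1, h2, h3, h4⟩ := pq_facts hn
  rw [sh'_eq_tri, tri_length (by omega), yEnc_length, xEnc_length, xEnc_length]; omega

/-- The key combinatorial lemma: no overlap between strings of the construction
can be longer than `2(n-2)`. -/
lemma no_long_overlap {n p q : ℕ} (hn : 64 ≤ n) (hpq : 2*p + q = n - 1)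
    (hq : 20 ≤ q) (hqp : q ≤ p)
    {u1 u2 u3 v1 v2 v3 : List Bool}
    (hu2 : u2.length = q - 1) (hv2 : v2.length = q - 1)
    (hv1a : q - 1 ≤ v1.length) (hv1b : v1.length ≤ q)
    (hv13 : v1.length + v3.length = 2*q - 1)
    (hu : (u1.length = q ∧ u3.length = q - 1 ∧ u2 ≠ u3)
        ∨ (u1.length = q - 1 ∧ u3.length = q ∧ u3.getD (q - 1) false = false))
    (hne : tri p u1 u2 u3 ≠ tri p v1 v2 v3)
    {l : ℕ} (hl1 : 2*(n-2) < l) (hl2 : l ≤ 3*n-5) :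
    ¬ ((tri p u1 u2 u3).drop ((tri p u1 u2 u3).length - l) = (tri p v1 v2 v3).take l) := by
  intro contra
  have hp1 : 1 ≤ p := by omega
  have hu13 : u1.length + u3.length = 2*q - 1 ∧ q - 1 ≤ u1.length ∧ u1.length ≤ q ∧
      q - 1 ≤ u3.length ∧ u3.length ≤ q := by
    rcases hu with ⟨h1,h2,_⟩|⟨h1,h2,_⟩ <;> omega
  obtain ⟨hu13, hu1a, hu1b, hu3a, hu3b⟩ := hu13
  have hulen : (tri p u1 u2 u3).length = 3*n-5 := by rw [tri_length hp1]; omega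
  have hvlen : (tri p v1 v2 v3).length = 3*n-5 := by rw [tri_length hp1]; omega
  set d := 3*n-5 - l with hd
  have key : ∀ j, j < l → (tri p u1 u2 u3)[d + j]? = (tri p v1 v2 v3)[j]? := by
    intro j hj
    have h2 := congrArg (fun s => s[j]?) contra
    rw [List.getElem?_drop, List.getElem?_take, if_pos hj, hulen, ← hd] at h2
    exact h2
  rcases Nat.eq_zero_or_pos d with hd0 | hdpos
  · apply hne
    have hl3 : l = 3*n-5 := by omega
    rw [hulen, hl3, Nat.sub_self, List.drop_zero] at contra
    rw [contra]
    exact List.take_of_length_le hvlen.le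
  -- now 1 ≤ d ≤ n-2
  have hdub : d ≤ n - 2 := by omega
  have c0 : (tri p u1 u2 u3)[d]? = some false := by
    have := key 0 (by omega)
    rw [tri_get_zero1 hp1] at this
    simpa using this
  by_cases hW1 : p ≤ d ∧ d < p + u1.length
  · -- main subcase A : d in the w1 window
    obtain ⟨hWa, hWb⟩ := hW1
    have c1 := key (2*p + v1.length) (by omega)
    rw [tri_get_zero2 hp1] at c1
    by_cases hk1 : 3*p + u1.length ≤ d + (2*p + v1.length) ∧
        d + (2*p + v1.length) < 3*p + u1.length + u2.length
    swap
    · rw [tri_get_true hp1 u1 u2 u3 (by omega) (by omega) (by omega) (by omega) hk1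
        (by omega) (by omega)] at c1
      simp at c1
    obtain ⟨hk1a, hk1b⟩ := hk1
    set f := d + (2*p + v1.length) - (3*p + u1.length) with hfdef
    have hf : f < u2.length := by omega
    have hu2f : u2.getD f false = false := by
      rw [show d + (2*p + v1.length) = 3*p + u1.length + f by omega,
        tri_get_w2 hp1 u1 u2 u3 hf] at c1
      exact Option.some.inj c1
    have win2 : ∀ t, t < u2.length → t ≠ f → u2.getD t false = true := by
      intro t ht htf
      have hj := key (2*p + v1.length + t - f) (by omega)
      rw [show d + (2*p + v1.length + t - f) = 3*p + u1.length + t by omega,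
        tri_get_w2 hp1 u1 u2 u3 ht,
        tri_get_true hp1 v1 v2 v3 (by omega) (by omega) (by omega) (by omega)
          (by omega) (by omega) (by omega)] at hj
      exact Option.some.inj hj
    have c2 := key (4*p + v1.length + v2.length) (by omega)
    rw [tri_get_zero3 hp1] at c2
    have hf3 : f < u3.length := by omega
    rw [show d + (4*p + v1.length + v2.length) = 5*p + u1.length + u2.length + f by omega,
      tri_get_w3 hp1 u1 u2 u3 hf3] at c2
    have hu3f : u3.getD f false = false := Option.some.inj c2
    have win3 : ∀ t, t < u3.length → t ≠ f → u3.getD t false = true := by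
      intro t ht htf
      have hj := key (4*p + v1.length + v2.length + t - f) (by omega)
      rw [show d + (4*p + v1.length + v2.length + t - f)
            = 5*p + u1.length + u2.length + t by omega,
        tri_get_w3 hp1 u1 u2 u3 ht,
        tri_get_true hp1 v1 v2 v3 (by omega) (by omega) (by omega) (by omega)
          (by omega) (by omega) (by omega)] at hj
      exact Option.some.inj hj
    rcases hu with ⟨hq1, hq3, hne23⟩ | ⟨hq1, hq3, htail⟩
    · apply hne23
      apply List.ext_getElem (by omega)
      intro t ht1 ht2
      rw [← List.getD_eq_getElem u2 false ht1, ← List.getD_eq_getElem u3 false ht2]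
      by_cases htf : t = f
      · rw [htf, hu2f, hu3f]
      · rw [win2 t ht1 htf, win3 t ht2 htf]
    · have hbad : u3.getD (q-1) false = true := win3 (q-1) (by omega) (by omega)
      rw [htail] at hbad
      cases hbad
  · -- d not in the w1 window
    by_cases hA1 : d = 2*p + u1.length
    · -- subcase B : d = first segment boundary
      have hu1q : u1.length = q - 1 := by omega
      have c1 := key (2*p + v1.length) (by omega)
      rw [tri_get_zero2 hp1] at c1
      rcases Nat.lt_or_ge v1.length q with hv1q | hv1q
      · have c2 := key (4*p + v1.length + v2.length) (by omega)
        rw [tri_get_zero3 hp1] at c2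
        rw [tri_get_true hp1 u1 u2 u3 (by omega) (by omega) (by omega) (by omega)
          (by omega) (by omega) (by omega)] at c2
        simp at c2
      · rw [tri_get_true hp1 u1 u2 u3 (by omega) (by omega) (by omega) (by omega)
          (by omega) (by omega) (by omega)] at c1
        simp at c1
    · rw [tri_get_true hp1 u1 u2 u3 (by omega) (by omega) hW1 hA1 (by omega) (by omega)
        (by omega)] at c0
      simp at c0

lemma ovLen_le (s t : List Bool) (B : ℕ)
    (h : ∀ l, B < l → l ≤ min s.length t.length →
      ¬ (s.drop (s.length - l) = t.take l)) : ovLen s t ≤ B := by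
  unfold ovLen
  by_contra hc
  push_neg at hc
  refine h _ hc (Nat.findGreatest_le _) (Nat.findGreatest_of_ne_zero
    (P := fun i => s.drop (s.length - i) = t.take i)
    (n := min s.length t.length) rfl ?_)
  omega

lemma le_ovLen (s t : List Bool) (l : ℕ) (hl : l ≤ min s.length t.length)
    (h : s.drop (s.length - l) = t.take l) : l ≤ ovLen s t :=
  Nat.le_findGreatest hl h

lemma ovLen_le_main {n : ℕ} (hn : 64 ≤ n) {u1 u2 u3 v1 v2 v3 : List Bool}
    (hu2 : u2.length = qOf n - 1) (hv2 : v2.length = qOf n - 1)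
    (hv1a : qOf n - 1 ≤ v1.length) (hv1b : v1.length ≤ qOf n)
    (hv13 : v1.length + v3.length = 2*(qOf n) - 1)
    (hu : (u1.length = qOf n ∧ u3.length = qOf n - 1 ∧ u2 ≠ u3)
        ∨ (u1.length = qOf n - 1 ∧ u3.length = qOf n ∧ u3.getD (qOf n - 1) false = false))
    (hne : tri (pOf n) u1 u2 u3 ≠ tri (pOf n) v1 v2 v3) :
    ovLen (tri (pOf n) u1 u2 u3) (tri (pOf n) v1 v2 v3) ≤ 2*(n-2) := by
  obtain ⟨hpq, hq, hqp, hpq2⟩ := pq_facts hn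
  have hp1 : 1 ≤ pOf n := by omega
  have hu13 : u1.length + u3.length = 2*(qOf n) - 1 := by
    rcases hu with ⟨a,b,_⟩|⟨a,b,_⟩ <;> omega
  have hul : (tri (pOf n) u1 u2 u3).length = 3*n-5 := by rw [tri_length hp1]; omega
  apply ovLen_le
  intro l hl hlm
  have hlm' : l ≤ (tri (pOf n) u1 u2 u3).length := le_trans hlm (min_le_left _ _)
  exact no_long_overlap hn hpq hq hqp hu2 hv2 hv1a hv1b hv13 hu hne hl (by omega)

lemma Sconstr_length (n m : ℕ) (E : ℕ → ℕ × ℕ) : (Sconstr n m E).length = 2*m := by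
  induction m with
  | zero => rfl
  | succ m ih =>
    rw [show Sconstr n (m+1) E = Sconstr n m E ++
      [sh n (E m).1 (E m).2 (m+1), sh' n (E m).1 (E m).2 (m+1)] from by
        simp [Sconstr, List.range_succ]]
    simp only [List.length_append, ih, List.length_cons, List.length_nil]
    omega

lemma Sconstr_get (n m : ℕ) (E : ℕ → ℕ × ℕ) (k : ℕ) (hk : k < 2*m) :
    (Sconstr n m E).getD k [] =
      if k % 2 = 0 then sh n (E (k/2)).1 (E (k/2)).2 (k/2+1)
      else sh' n (E (k/2)).1 (E (k/2)).2 (k/2+1) := by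
  induction m with
  | zero => omega
  | succ m ih =>
    rw [show Sconstr n (m+1) E = Sconstr n m E ++
      [sh n (E m).1 (E m).2 (m+1), sh' n (E m).1 (E m).2 (m+1)] from by
        simp [Sconstr, List.range_succ]]
    rcases Nat.lt_or_ge k (2*m) with h | h
    · rw [List.getD_append _ _ _ _ (by rw [Sconstr_length]; exact h)]
      exact ih h
    · rw [List.getD_append_right _ _ _ _ (by rw [Sconstr_length]; exact h), Sconstr_length]
      rcases Nat.lt_or_ge k (2*m+1) with h2 | h2
      · have hk0 : k = 2*m := by omega
        subst hk0
        rw [Nat.sub_self, if_pos (by omega), show 2*m/2 = m by omega]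
        rfl
      · have hk1 : k = 2*m+1 := by omega
        subst hk1
        rw [show 2*m+1 - 2*m = 1 by omega, if_neg (by omega), show (2*m+1)/2 = m by omega]
        rfl

lemma ovLen_any_le {n m : ℕ} {E : ℕ → ℕ × ℕ} (hn : 64 ≤ n)
    (harcs : ∀ h < m, 1 ≤ (E h).1 ∧ (E h).1 ≤ n ∧ 1 ≤ (E h).2 ∧ (E h).2 ≤ n ∧
      (E h).1 ≠ (E h).2)
    (hinj : ∀ h < m, ∀ h' < m, E h = E h' → h = h')
    {k1 k2 : ℕ} (h1 : k1 < 2*m) (h2 : k2 < 2*m) (hkne : k1 ≠ k2) :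
    ovLen ((Sconstr n m E).getD k1 []) ((Sconstr n m E).getD k2 []) ≤ 2*(n-2) := by
  obtain ⟨hpq, hq, hqp, hpq2⟩ := pq_facts hn
  have hp1 : 1 ≤ pOf n := by omega
  have hm1 : k1/2 < m := by omega
  have hm2 : k2/2 < m := by omega
  obtain ⟨ha1, ha2, ha3, ha4, ha5⟩ := harcs _ hm1
  obtain ⟨hb1, hb2, hb3, hb4, hb5⟩ := harcs _ hm2
  rw [Sconstr_get n m E k1 h1, Sconstr_get n m E k2 h2]
  by_cases p1 : k1 % 2 = 0 <;> by_cases p2 : k2 % 2 = 0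
  · rw [if_pos p1, if_pos p2, sh_eq_tri, sh_eq_tri]
    have hhne : k1/2 ≠ k2/2 := by omega
    refine ovLen_le_main hn (xEnc_length _ _) (xEnc_length _ _)
      (by rw [yEnc_length]; omega) (by rw [yEnc_length])
      (by rw [yEnc_length, xEnc_length]; omega)
      (Or.inl ⟨yEnc_length _ _, xEnc_length _ _,
        fun e => ha5 (xEnc_inj hn ha2 ha4 e)⟩) ?_
    intro heq
    obtain ⟨e1, e2, e3⟩ := tri_inj hp1 (by rw [yEnc_length, yEnc_length])
      (by rw [xEnc_length, xEnc_length]) heq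
    exact hhne (hinj _ hm1 _ hm2 (Prod.ext (xEnc_inj hn ha2 hb2 e2) (xEnc_inj hn ha4 hb4 e3)))
  · rw [if_pos p1, if_neg p2, sh_eq_tri, sh'_eq_tri]
    exact ovLen_le_main hn (xEnc_length _ _) (xEnc_length _ _)
      (by rw [xEnc_length]) (by rw [xEnc_length]; omega)
      (by rw [yEnc_length, xEnc_length]; omega)
      (Or.inl ⟨yEnc_length _ _, xEnc_length _ _,
        fun e => ha5 (xEnc_inj hn ha2 ha4 e)⟩)
      (tri_type_ne hn hpq hq hqp (yEnc_length _ _) (xEnc_length _ _)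
        (xEnc_length _ _) (yEnc_length _ _))
  · rw [if_neg p1, if_pos p2, sh'_eq_tri, sh_eq_tri]
    exact ovLen_le_main hn (xEnc_length _ _) (xEnc_length _ _)
      (by rw [yEnc_length]; omega) (by rw [yEnc_length])
      (by rw [yEnc_length, xEnc_length]; omega)
      (Or.inr ⟨xEnc_length _ _, yEnc_length _ _, yEnc_last hn⟩)
      (Ne.symm (tri_type_ne hn hpq hq hqp (yEnc_length _ _) (xEnc_length _ _)
        (xEnc_length _ _) (yEnc_length _ _)))
  · rw [if_neg p1, if_neg p2, sh'_eq_tri, sh'_eq_tri]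
    have hhne : k1/2 ≠ k2/2 := by omega
    refine ovLen_le_main hn (xEnc_length _ _) (xEnc_length _ _)
      (by rw [xEnc_length]) (by rw [xEnc_length]; omega)
      (by rw [yEnc_length, xEnc_length]; omega)
      (Or.inr ⟨xEnc_length _ _, yEnc_length _ _, yEnc_last hn⟩) ?_
    intro heq
    obtain ⟨e1, e2, e3⟩ := tri_inj hp1 (by rw [xEnc_length, xEnc_length])
      (by rw [xEnc_length, xEnc_length]) heq
    exact hhne (hinj _ hm1 _ hm2 (Prod.ext (xEnc_inj hn ha2 hb2 e1) (xEnc_inj hn ha4 hb4 e2)))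

lemma ovLen_pair {n : ℕ} (hn : 64 ≤ n) {i j h : ℕ} (hi2 : i ≤ n) (hj2 : j ≤ n)
    (hij : i ≠ j) : ovLen (sh n i j h) (sh' n i j h) = 2*(n-2) := by
  obtain ⟨hpq, hq, hqp, hpq2⟩ := pq_facts hn
  have hp1 : 1 ≤ pOf n := by omega
  apply _root_.le_antisymm
  · rw [sh_eq_tri, sh'_eq_tri]
    exact ovLen_le_main hn (xEnc_length _ _) (xEnc_length _ _)
      (by rw [xEnc_length]) (by rw [xEnc_length]; omega)
      (by rw [yEnc_length, xEnc_length]; omega)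
      (Or.inl ⟨yEnc_length _ _, xEnc_length _ _,
        fun e => hij (xEnc_inj hn hi2 hj2 e)⟩)
      (tri_type_ne hn hpq hq hqp (yEnc_length _ _) (xEnc_length _ _)
        (xEnc_length _ _) (yEnc_length _ _))
  · apply le_ovLen
    · rw [sh_length hn, sh'_length hn]; omega
    · rw [sh_length hn, sh_eq_tri, sh'_eq_tri]
      rw [show 3*n - 5 - 2*(n-2) = (segb (pOf n) (yEnc n h)).length from by
        rw [segb_length hp1, yEnc_length]; omega]
      unfold tri
      rw [List.drop_left]
      rw [show (2*(n-2) : ℕ) = (segb (pOf n) (xEnc n i) ++ segb (pOf n) (xEnc n j)).length from by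
        rw [List.length_append, segb_length hp1, segb_length hp1, xEnc_length, xEnc_length]
        omega]
      rw [← List.append_assoc, List.take_left]

lemma pairWeight_pair {n m : ℕ} {E : ℕ → ℕ × ℕ} (hn : 64 ≤ n)
    (harcs : ∀ h < m, 1 ≤ (E h).1 ∧ (E h).1 ≤ n ∧ 1 ≤ (E h).2 ∧ (E h).2 ≤ n ∧
      (E h).1 ≠ (E h).2)
    {h : ℕ} (hh : h < m) :
    pairWeight (Sconstr n m E) (2*h, 2*h+1) = 2*(n-2) := by
  obtain ⟨hpq, hq, hqp, hpq2⟩ := pq_facts hn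
  have hp1 : 1 ≤ pOf n := by omega
  obtain ⟨ha1, ha2, ha3, ha4, ha5⟩ := harcs h hh
  have e1 : (Sconstr n m E).getD (2*h) [] = sh n (E h).1 (E h).2 (h+1) := by
    rw [Sconstr_get n m E _ (by omega), if_pos (by omega), show 2*h/2 = h by omega]
  have e2 : (Sconstr n m E).getD (2*h+1) [] = sh' n (E h).1 (E h).2 (h+1) := by
    rw [Sconstr_get n m E _ (by omega), if_neg (by omega), show (2*h+1)/2 = h by omega]
  show max (ovLen ((Sconstr n m E).getD (2*h) []) ((Sconstr n m E).getD (2*h+1) []))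
      (ovLen ((Sconstr n m E).getD (2*h+1) []) ((Sconstr n m E).getD (2*h) [])) = 2*(n-2)
  rw [e1, e2, ovLen_pair hn ha2 ha4 ha5]
  apply max_eq_left
  rw [sh_eq_tri, sh'_eq_tri]
  exact ovLen_le_main hn (xEnc_length _ _) (xEnc_length _ _)
    (by rw [yEnc_length]; omega) (by rw [yEnc_length])
    (by rw [yEnc_length, xEnc_length]; omega)
    (Or.inr ⟨xEnc_length _ _, yEnc_length _ _, yEnc_last hn⟩)
    (Ne.symm (tri_type_ne hn hpq hq hqp (yEnc_length _ _) (xEnc_length _ _)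
      (xEnc_length _ _) (yEnc_length _ _)))

lemma isMatching_Mconstr (n m : ℕ) (E : ℕ → ℕ × ℕ) :
    IsMatching (Sconstr n m E) (Mconstr m) := by
  constructor
  · intro pr hpr
    simp only [Mconstr, Finset.mem_image, Finset.mem_range] at hpr
    obtain ⟨h, hh, rfl⟩ := hpr
    rw [Sconstr_length]
    exact ⟨by omega, by omega⟩
  · intro pr hpr qr hqr hne
    simp only [Mconstr, Finset.mem_image, Finset.mem_range] at hpr hqr
    obtain ⟨a, ha, rfl⟩ := hpr
    obtain ⟨b, hb, rfl⟩ := hqr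
    have hab : a ≠ b := by rintro rfl; exact hne rfl
    refine ⟨by simp; omega, by simp; omega, by simp; omega, by simp; omega⟩

lemma sum_Mconstr {n m : ℕ} {E : ℕ → ℕ × ℕ} (hn : 64 ≤ n)
    (harcs : ∀ h < m, 1 ≤ (E h).1 ∧ (E h).1 ≤ n ∧ 1 ≤ (E h).2 ∧ (E h).2 ≤ n ∧
      (E h).1 ≠ (E h).2) :
    ∑ pr ∈ Mconstr m, pairWeight (Sconstr n m E) pr = 2*(n-2)*m := by
  rw [Mconstr, Finset.sum_image (by intro a _ b _ hab; simp [Prod.ext_iff] at hab; omega)]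
  rw [Finset.sum_congr rfl (fun h hh => pairWeight_pair hn harcs (Finset.mem_range.mp hh))]
  rw [Finset.sum_const, Finset.card_range, smul_eq_mul]
  exact Nat.mul_comm _ _

lemma matching_card_le {S : List (List Bool)} {M : Finset (ℕ × ℕ)}
    (hM : IsMatching S M) : 2 * M.card ≤ S.length := by
  classical
  have hcard : (M.biUnion fun pr => ({pr.1, pr.2} : Finset ℕ)).card
      = ∑ pr ∈ M, ({pr.1, pr.2} : Finset ℕ).card := by
    apply Finset.card_biUnion
    intro a ha b hb hab
    obtain ⟨d1, d2, d3, d4⟩ := hM.2 a ha b hb hab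
    rw [Function.onFun, Finset.disjoint_left]
    intro x hx1 hx2
    simp only [Finset.mem_insert, Finset.mem_singleton] at hx1 hx2
    rcases hx1 with rfl | rfl <;> rcases hx2 with h | h
    · exact d1 h
    · exact d2 h
    · exact d3 h
    · exact d4 h
  have hsum : ∑ pr ∈ M, ({pr.1, pr.2} : Finset ℕ).card = 2 * M.card := by
    rw [Finset.sum_congr rfl (fun pr hpr => Finset.card_pair (ne_of_lt (hM.1 pr hpr).1)),
      Finset.sum_const, smul_eq_mul]
    exact Nat.mul_comm _ _
  have hsub : (M.biUnion fun pr => ({pr.1, pr.2} : Finset ℕ)) ⊆ Finset.range S.length := by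
    intro x hx
    simp only [Finset.mem_biUnion] at hx
    obtain ⟨a, ha, hxa⟩ := hx
    obtain ⟨g1, g2⟩ := hM.1 a ha
    simp only [Finset.mem_insert, Finset.mem_singleton] at hxa
    rw [Finset.mem_range]
    rcases hxa with rfl | rfl <;> omega
  calc 2 * M.card = ∑ pr ∈ M, ({pr.1, pr.2} : Finset ℕ).card := hsum.symm
    _ = (M.biUnion fun pr => ({pr.1, pr.2} : Finset ℕ)).card := hcard.symm
    _ ≤ (Finset.range S.length).card := Finset.card_le_card hsub
    _ = S.length := Finset.card_range _

lemma sum_any_le {n m : ℕ} {E : ℕ → ℕ × ℕ} (hn : 64 ≤ n)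
    (harcs : ∀ h < m, 1 ≤ (E h).1 ∧ (E h).1 ≤ n ∧ 1 ≤ (E h).2 ∧ (E h).2 ≤ n ∧
      (E h).1 ≠ (E h).2)
    (hinj : ∀ h < m, ∀ h' < m, E h = E h' → h = h')
    {M : Finset (ℕ × ℕ)} (hM : IsMatching (Sconstr n m E) M) :
    ∑ pr ∈ M, pairWeight (Sconstr n m E) pr ≤ 2*(n-2)*m := by
  have hcard := matching_card_le hM
  rw [Sconstr_length] at hcard
  calc ∑ pr ∈ M, pairWeight (Sconstr n m E) pr
      ≤ ∑ _pr ∈ M, 2*(n-2) := by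
        apply Finset.sum_le_sum
        intro pr hpr
        obtain ⟨g1, g2⟩ := hM.1 pr hpr
        rw [Sconstr_length] at g2
        apply max_le
        · exact ovLen_any_le hn harcs hinj (by omega) g2 (by omega)
        · exact ovLen_any_le hn harcs hinj g2 (by omega) (by omega)
    _ = M.card * (2*(n-2)) := by rw [Finset.sum_const, smul_eq_mul]
    _ ≤ m * (2*(n-2)) := Nat.mul_le_mul_right _ (by omega)
    _ = 2*(n-2)*m := Nat.mul_comm _ _

end SSPaux

/-- M = {{s_h, s'_h}} is a maximum weight matching in G(S) and
μ(S) = 2(n−2)m. -/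
theorem matching_is_maximum (n m : ℕ) (E : ℕ → ℕ × ℕ) (hn : 64 ≤ n) (hm : 1 ≤ m)
    (harcs : ∀ h < m, 1 ≤ (E h).1 ∧ (E h).1 ≤ n ∧ 1 ≤ (E h).2 ∧ (E h).2 ≤ n ∧
      (E h).1 ≠ (E h).2)
    (hinj : ∀ h < m, ∀ h' < m, E h = E h' → h = h') :
    IsMatching (Sconstr n m E) (Mconstr m) ∧
      (∑ p ∈ Mconstr m, pairWeight (Sconstr n m E) p) = 2 * (n - 2) * m ∧
      mu (Sconstr n m E) = 2 * (n - 2) * m := by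
  have hMatch := SSPaux.isMatching_Mconstr n m E
  have hSum := SSPaux.sum_Mconstr hn harcs
  refine ⟨hMatch, hSum, ?_⟩
  have hmem : 2*(n-2)*m ∈ { t | ∃ M : Finset (ℕ × ℕ), IsMatching (Sconstr n m E) M ∧
      t = ∑ p ∈ M, pairWeight (Sconstr n m E) p } :=
    ⟨Mconstr m, hMatch, hSum.symm⟩
  have hub : ∀ t ∈ { t | ∃ M : Finset (ℕ × ℕ), IsMatching (Sconstr n m E) M ∧
      t = ∑ p ∈ M, pairWeight (Sconstr n m E) p }, t ≤ 2*(n-2)*m := by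
    rintro t ⟨M, hM, rfl⟩
    exact SSPaux.sum_any_le hn harcs hinj hM
  unfold mu
  exact _root_.le_antisymm (csSup_le ⟨_, hmem⟩ hub) (le_csSup ⟨_, hub⟩ hmem)
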